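/- In the algebra Ũ(χ), for i, j, k ∈ I pairwise satisfying i ≠ j, j ≠ k, k ≠ i, and any m, n ∈ Z≥0, the commutator [Ẽ^+_{m,α_i,α_j}, F̃^+_{n,α_i,α_k}] = 0. -/

import Mathlib

/-- `ℤΠ`, the free `ℤ`-module with basis `Π = {α_1,…,α_N}`. -/
abbrev Mz (N : ℕ) := Fin N →₀ ℤ

/-- The simple root `α_i`. -/
noncomputable def alphav {N : ℕ} (i : Fin N) : Mz N := Finsupp.single i 1

/-- A bi-homomorphism `χ : ℤΠ × ℤΠ → ℂ*`. -/
def IsBihom {N : ℕ} (χ : Mz N → Mz N → ℂˣ) : Prop :=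
  (∀ a b c : Mz N, χ a (b + c) = χ a b * χ a c) ∧
  (∀ a b c : Mz N, χ (a + b) c = χ a c * χ b c)

/-- `(m)_t := 1 + t + ⋯ + t^{m-1}`. -/
noncomputable def qnum (m : ℕ) (t : ℂ) : ℂ := ∑ j ∈ Finset.range m, t ^ j

/-- `(m)_t! := ∏_{j=1}^m (j)_t`. -/
noncomputable def qfact (m : ℕ) (t : ℂ) : ℂ := ∏ j ∈ Finset.range m, qnum (j + 1) t

/-- `(m; t₁, t₂)! := ∏_{j=1}^m (1 - t₁^{j-1} t₂)`. -/
noncomputable def tfact (m : ℕ) (t₁ t₂ : ℂ) : ℂ := ∏ j ∈ Finset.range m, (1 - t₁ ^ j * t₂)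

/-- Generators of the algebra `Ũ(χ)`: `K̃_α, L̃_α (α ∈ ℤΠ)`, `Ẽ_i, F̃_i (i ∈ I)`. -/
inductive Gen (N : ℕ)
  | K : Mz N → Gen N
  | L : Mz N → Gen N
  | E : Fin N → Gen N
  | F : Fin N → Gen N

/-- The free `ℂ`-algebra on the generators. -/
abbrev FA (N : ℕ) := FreeAlgebra ℂ (Gen N)

/-- Embedding of a generator into the free algebra. -/
noncomputable def gen {N : ℕ} (x : Gen N) : FA N := FreeAlgebra.ι ℂ x

/-- The defining relations of `Ũ(χ)`. -/
inductive URel {N : ℕ} (χ : Mz N → Mz N → ℂˣ) : FA N → FA N → Prop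
  | K0 : URel χ (gen (Gen.K 0)) 1
  | L0 : URel χ (gen (Gen.L 0)) 1
  | KK (a b : Mz N) : URel χ (gen (Gen.K a) * gen (Gen.K b)) (gen (Gen.K (a + b)))
  | LL (a b : Mz N) : URel χ (gen (Gen.L a) * gen (Gen.L b)) (gen (Gen.L (a + b)))
  | KL (a b : Mz N) : URel χ (gen (Gen.K a) * gen (Gen.L b)) (gen (Gen.L b) * gen (Gen.K a))
  | KE (a : Mz N) (i : Fin N) : URel χ (gen (Gen.K a) * gen (Gen.E i))
      ((χ a (alphav i) : ℂ) • (gen (Gen.E i) * gen (Gen.K a)))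
  | LE (a : Mz N) (i : Fin N) : URel χ (gen (Gen.L a) * gen (Gen.E i))
      ((χ (-alphav i) a : ℂ) • (gen (Gen.E i) * gen (Gen.L a)))
  | KF (a : Mz N) (i : Fin N) : URel χ (gen (Gen.K a) * gen (Gen.F i))
      ((χ a (-alphav i) : ℂ) • (gen (Gen.F i) * gen (Gen.K a)))
  | LF (a : Mz N) (i : Fin N) : URel χ (gen (Gen.L a) * gen (Gen.F i))
      ((χ (alphav i) a : ℂ) • (gen (Gen.F i) * gen (Gen.L a)))
  | EF (i j : Fin N) : URel χ (gen (Gen.E i) * gen (Gen.F j) - gen (Gen.F j) * gen (Gen.E i))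
      (if i = j then -gen (Gen.K (alphav i)) + gen (Gen.L (alphav i)) else 0)

/-- The algebra `Ũ(χ)`. -/
abbrev tU {N : ℕ} (χ : Mz N → Mz N → ℂˣ) := RingQuot (URel χ)

/-- `K̃_α` in `Ũ(χ)`. -/
noncomputable def elK {N : ℕ} (χ : Mz N → Mz N → ℂˣ) (a : Mz N) : tU χ :=
  RingQuot.mkAlgHom ℂ (URel χ) (gen (Gen.K a))

/-- `L̃_α` in `Ũ(χ)`. -/
noncomputable def elL {N : ℕ} (χ : Mz N → Mz N → ℂˣ) (a : Mz N) : tU χ :=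
  RingQuot.mkAlgHom ℂ (URel χ) (gen (Gen.L a))

/-- `Ẽ_i` in `Ũ(χ)`. -/
noncomputable def elE {N : ℕ} (χ : Mz N → Mz N → ℂˣ) (i : Fin N) : tU χ :=
  RingQuot.mkAlgHom ℂ (URel χ) (gen (Gen.E i))

/-- `F̃_i` in `Ũ(χ)`. -/
noncomputable def elF {N : ℕ} (χ : Mz N → Mz N → ℂˣ) (i : Fin N) : tU χ :=
  RingQuot.mkAlgHom ℂ (URel χ) (gen (Gen.F i))

/-- Iterated root vector `Ẽ⁺_{m,α_i,α_j}`. -/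
noncomputable def Ep {N : ℕ} (χ : Mz N → Mz N → ℂˣ) (i j : Fin N) : ℕ → tU χ
  | 0 => elE χ j
  | (m + 1) => elE χ i * Ep χ i j m -
      ((χ (alphav i) (alphav i) : ℂ) ^ m * (χ (alphav i) (alphav j) : ℂ)) •
        (Ep χ i j m * elE χ i)

/-- Iterated root vector `F̃⁺_{m,α_i,α_j}`. -/
noncomputable def Fp {N : ℕ} (χ : Mz N → Mz N → ℂˣ) (i j : Fin N) : ℕ → tU χ
  | 0 => elF χ j
  | (m + 1) => elF χ i * Fp χ i j m -
      ((χ (alphav i) (alphav i) : ℂ) ^ m * (χ (alphav j) (alphav i) : ℂ)) •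
        (Fp χ i j m * elF χ i)

section Helpers

variable {N : ℕ} {χ : Mz N → Mz N → ℂˣ}

private lemma mkrel {x y : FA N} (h : URel χ x y) :
    RingQuot.mkAlgHom ℂ (URel χ) x = RingQuot.mkAlgHom ℂ (URel χ) y :=
  RingQuot.mkAlgHom_rel ℂ h

private lemma rel_KE (a : Mz N) (i : Fin N) :
    elK χ a * elE χ i = (χ a (alphav i) : ℂ) • (elE χ i * elK χ a) := by
  have h := mkrel (URel.KE (χ := χ) a i)
  simpa [elK, elE, map_mul, map_smul] using h

private lemma rel_LE (a : Mz N) (i : Fin N) :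
    elL χ a * elE χ i = (χ (-alphav i) a : ℂ) • (elE χ i * elL χ a) := by
  have h := mkrel (URel.LE (χ := χ) a i)
  simpa [elL, elE, map_mul, map_smul] using h

private lemma rel_LF (a : Mz N) (i : Fin N) :
    elL χ a * elF χ i = (χ (alphav i) a : ℂ) • (elF χ i * elL χ a) := by
  have h := mkrel (URel.LF (χ := χ) a i)
  simpa [elL, elF, map_mul, map_smul] using h

private lemma rel_EF_ne {i j : Fin N} (h : i ≠ j) :
    elE χ i * elF χ j = elF χ j * elE χ i := by
  have h2 := mkrel (URel.EF (χ := χ) i j)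
  rw [if_neg h] at h2
  have h3 : elE χ i * elF χ j - elF χ j * elE χ i = 0 := by
    simpa [elE, elF, map_sub, map_mul] using h2
  exact sub_eq_zero.1 h3

private lemma rel_EF_eq (i : Fin N) :
    elE χ i * elF χ i = elF χ i * elE χ i - elK χ (alphav i) + elL χ (alphav i) := by
  have h2 := mkrel (URel.EF (χ := χ) i i)
  rw [if_pos rfl] at h2
  have h3 : elE χ i * elF χ i - elF χ i * elE χ i
      = -elK χ (alphav i) + elL χ (alphav i) := by
    simpa [elE, elF, elK, elL, map_sub, map_mul, map_add, map_neg] using h2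
  have h4 := sub_eq_iff_eq_add.1 h3
  rw [h4]; abel

/-- `x * y = u • (y * x)`. -/
private def SCom {A : Type*} [Ring A] [Algebra ℂ A] (u : ℂ) (x y : A) : Prop :=
  x * y = u • (y * x)

private lemma SCom.of_eq {A : Type*} [Ring A] [Algebra ℂ A] {u v : ℂ} {x y : A}
    (h : SCom u x y) (huv : u = v) : SCom v x y := huv ▸ h

private lemma SCom.mul_right {A : Type*} [Ring A] [Algebra ℂ A] {u v : ℂ} {x y z : A}
    (h1 : SCom u x y) (h2 : SCom v x z) : SCom (u * v) x (y * z) := by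
  unfold SCom at *
  calc x * (y * z) = (x * y) * z := by rw [mul_assoc]
    _ = u • (y * (x * z)) := by rw [h1, smul_mul_assoc, mul_assoc]
    _ = u • (y * (v • (z * x))) := by rw [h2]
    _ = (u * v) • ((y * z) * x) := by rw [mul_smul_comm, smul_smul, ← mul_assoc]

private lemma SCom.mul_left {A : Type*} [Ring A] [Algebra ℂ A] {u v : ℂ} {x y z : A}
    (h1 : SCom u x z) (h2 : SCom v y z) : SCom (u * v) (x * y) z := by
  unfold SCom at *
  calc (x * y) * z = x * (y * z) := by rw [mul_assoc]
    _ = v • ((x * z) * y) := by rw [h2, mul_smul_comm, mul_assoc]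
    _ = v • ((u • (z * x)) * y) := by rw [h1]
    _ = (u * v) • (z * (x * y)) := by
        rw [smul_mul_assoc, smul_smul, mul_assoc, mul_comm u v]

private lemma SCom.smul_right {A : Type*} [Ring A] [Algebra ℂ A] {u : ℂ} {x y : A}
    (h : SCom u x y) (c : ℂ) : SCom u x (c • y) := by
  unfold SCom at *
  rw [mul_smul_comm, h, smul_comm, smul_mul_assoc]

private lemma SCom.smul_left {A : Type*} [Ring A] [Algebra ℂ A] {u : ℂ} {x y : A}
    (h : SCom u x y) (c : ℂ) : SCom u (c • x) y := by
  unfold SCom at *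
  rw [smul_mul_assoc, h, smul_comm, mul_smul_comm]

private lemma SCom.sub_right {A : Type*} [Ring A] [Algebra ℂ A] {u : ℂ} {x y z : A}
    (h1 : SCom u x y) (h2 : SCom u x z) : SCom u x (y - z) := by
  unfold SCom at *
  rw [mul_sub, h1, h2, sub_mul, smul_sub]

private lemma SCom.sub_left {A : Type*} [Ring A] [Algebra ℂ A] {u : ℂ} {x y z : A}
    (h1 : SCom u x z) (h2 : SCom u y z) : SCom u (x - y) z := by
  unfold SCom at *
  rw [sub_mul, h1, h2, mul_sub, smul_sub]

private lemma sc_KE (a : Mz N) (i : Fin N) :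
    SCom ((χ a (alphav i) : ℂ)) (elK χ a) (elE χ i) := rel_KE a i

private lemma sc_LE (a : Mz N) (i : Fin N) :
    SCom ((χ (-alphav i) a : ℂ)) (elL χ a) (elE χ i) := rel_LE a i

private lemma sc_LF (a : Mz N) (i : Fin N) :
    SCom ((χ (alphav i) a : ℂ)) (elL χ a) (elF χ i) := rel_LF a i

private lemma sc_EF_ne {i j : Fin N} (h : i ≠ j) :
    SCom 1 (elE χ i) (elF χ j) := by
  unfold SCom; rw [one_smul]; exact rel_EF_ne h

private lemma Ep_zero (i j : Fin N) : Ep χ i j 0 = elE χ j := rfl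

private lemma Fp_zero (i k : Fin N) : Fp χ i k 0 = elF χ k := rfl

private lemma Ep_succ (i j : Fin N) (m : ℕ) :
    Ep χ i j (m + 1) = elE χ i * Ep χ i j m -
      ((χ (alphav i) (alphav i) : ℂ) ^ m * (χ (alphav i) (alphav j) : ℂ)) •
        (Ep χ i j m * elE χ i) := rfl

private lemma Fp_succ (i k : Fin N) (n : ℕ) :
    Fp χ i k (n + 1) = elF χ i * Fp χ i k n -
      ((χ (alphav i) (alphav i) : ℂ) ^ n * (χ (alphav k) (alphav i) : ℂ)) •
        (Fp χ i k n * elF χ i) := rfl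

private lemma sc_K_Ep (a : Mz N) (i j : Fin N) :
    ∀ m, SCom ((χ a (alphav i) : ℂ) ^ m * (χ a (alphav j) : ℂ)) (elK χ a) (Ep χ i j m)
  | 0 => by
      have h := sc_KE (χ := χ) a j
      exact h.of_eq (by ring)
  | (m + 1) => by
      rw [Ep_succ]
      have h1 := (sc_KE (χ := χ) a i).mul_right (sc_K_Ep a i j m)
      have h2 := ((sc_K_Ep a i j m).mul_right (sc_KE (χ := χ) a i)).smul_right
        ((χ (alphav i) (alphav i) : ℂ) ^ m * (χ (alphav i) (alphav j) : ℂ))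
      exact ((h1.of_eq (by ring)).sub_right (h2.of_eq (by ring)))

private lemma sc_L_Ep (a : Mz N) (i j : Fin N) :
    ∀ m, SCom ((χ (-alphav i) a : ℂ) ^ m * (χ (-alphav j) a : ℂ)) (elL χ a) (Ep χ i j m)
  | 0 => by
      have h := sc_LE (χ := χ) a j
      exact h.of_eq (by ring)
  | (m + 1) => by
      rw [Ep_succ]
      have h1 := (sc_LE (χ := χ) a i).mul_right (sc_L_Ep a i j m)
      have h2 := ((sc_L_Ep a i j m).mul_right (sc_LE (χ := χ) a i)).smul_right
        ((χ (alphav i) (alphav i) : ℂ) ^ m * (χ (alphav i) (alphav j) : ℂ))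
      exact ((h1.of_eq (by ring)).sub_right (h2.of_eq (by ring)))

private lemma sc_L_Fp (a : Mz N) (i k : Fin N) :
    ∀ n, SCom ((χ (alphav i) a : ℂ) ^ n * (χ (alphav k) a : ℂ)) (elL χ a) (Fp χ i k n)
  | 0 => by
      have h := sc_LF (χ := χ) a k
      exact h.of_eq (by ring)
  | (n + 1) => by
      rw [Fp_succ]
      have h1 := (sc_LF (χ := χ) a i).mul_right (sc_L_Fp a i k n)
      have h2 := ((sc_L_Fp a i k n).mul_right (sc_LF (χ := χ) a i)).smul_right
        ((χ (alphav i) (alphav i) : ℂ) ^ n * (χ (alphav k) (alphav i) : ℂ))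
      exact ((h1.of_eq (by ring)).sub_right (h2.of_eq (by ring)))

private lemma sc_Ep_Fk {i j k : Fin N} (hik : i ≠ k) (hjk : j ≠ k) :
    ∀ m, SCom 1 (Ep χ i j m) (elF χ k)
  | 0 => sc_EF_ne hjk
  | (m + 1) => by
      rw [Ep_succ]
      have h1 := (sc_EF_ne (χ := χ) hik).mul_left (sc_Ep_Fk hik hjk m)
      have h2 := ((sc_Ep_Fk hik hjk m).mul_left (sc_EF_ne (χ := χ) hik)).smul_left
        ((χ (alphav i) (alphav i) : ℂ) ^ m * (χ (alphav i) (alphav j) : ℂ))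
      exact ((h1.of_eq (by ring)).sub_left (h2.of_eq (by ring)))

private lemma sc_Ej_Fp {i j k : Fin N} (hji : j ≠ i) (hjk : j ≠ k) :
    ∀ n, SCom 1 (elE χ j) (Fp χ i k n)
  | 0 => sc_EF_ne hjk
  | (n + 1) => by
      rw [Fp_succ]
      have h1 := (sc_EF_ne (χ := χ) hji).mul_right (sc_Ej_Fp hji hjk n)
      have h2 := ((sc_Ej_Fp hji hjk n).mul_right (sc_EF_ne (χ := χ) hji)).smul_right
        ((χ (alphav i) (alphav i) : ℂ) ^ n * (χ (alphav k) (alphav i) : ℂ))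
      exact ((h1.of_eq (by ring)).sub_right (h2.of_eq (by ring)))

private lemma chi_mul_neg (hχ : IsBihom χ) (a b : Mz N) :
    (χ a b : ℂ) * (χ (-a) b : ℂ) = 1 := by
  have h0 : χ 0 b = 1 := by
    have h := hχ.2 0 0 b
    rw [add_zero] at h
    exact (mul_eq_right.1 h.symm)
  have h1 : χ a b * χ (-a) b = 1 := by
    rw [← hχ.2, add_neg_cancel, h0]
  calc (χ a b : ℂ) * (χ (-a) b : ℂ) = ((χ a b * χ (-a) b : ℂˣ) : ℂ) := by
        rw [Units.val_mul]
    _ = 1 := by rw [h1, Units.val_one]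

/-- Key commutator lemma: `[Ẽ⁺_{m+1}, F̃_i] = c • Ẽ⁺_m L̃_{α_i}`. -/
private lemma comm_Ep_F (hχ : IsBihom χ) {i j : Fin N} (hij : i ≠ j) (m : ℕ) :
    ∃ c : ℂ, Ep χ i j (m + 1) * elF χ i - elF χ i * Ep χ i j (m + 1)
      = c • (Ep χ i j m * elL χ (alphav i)) := by
  induction m with
  | zero =>
    refine ⟨(χ (-alphav j) (alphav i) : ℂ) - (χ (alphav i) (alphav j) : ℂ), ?_⟩
    rw [Ep_succ]
    have hEF := rel_EF_eq (χ := χ) i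
    have hEjF := rel_EF_ne (χ := χ) (show j ≠ i from hij.symm)
    have hKEj := rel_KE (χ := χ) (alphav i) j
    have hLEj := rel_LE (χ := χ) (alphav i) j
    have rEF : ∀ z : tU χ, elE χ i * (elF χ i * z)
        = elF χ i * (elE χ i * z) - elK χ (alphav i) * z + elL χ (alphav i) * z := by
      intro z; rw [← mul_assoc, hEF, add_mul, sub_mul, mul_assoc]
    have rEjF : ∀ z : tU χ, elE χ j * (elF χ i * z) = elF χ i * (elE χ j * z) := by
      intro z; rw [← mul_assoc, hEjF, mul_assoc]
    simp only [Ep_succ, Ep_zero, pow_zero, one_mul]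
    simp only [Ep_zero, mul_sub, sub_mul, mul_add, add_mul, smul_mul_assoc, mul_smul_comm,
      mul_assoc, rEF, rEjF, hEF, hEjF, hKEj, hLEj, smul_sub, smul_add, smul_smul]
    match_scalars <;> ring
  | succ m ih =>
    obtain ⟨c, hc⟩ := ih
    refine ⟨c + (χ (-alphav i) (alphav i) : ℂ) ^ (m + 1) * (χ (-alphav j) (alphav i) : ℂ)
      - (χ (alphav i) (alphav i) : ℂ) ^ (m + 1) * (χ (alphav i) (alphav j) : ℂ), ?_⟩
    have hqq := chi_mul_neg hχ (alphav i) (alphav i)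
    have hXF : Ep χ i j (m + 1) * elF χ i
        = elF χ i * Ep χ i j (m + 1) + c • (Ep χ i j m * elL χ (alphav i)) := by
      rw [← hc]; abel
    have rXF : ∀ z : tU χ, Ep χ i j (m + 1) * (elF χ i * z)
        = elF χ i * (Ep χ i j (m + 1) * z)
          + c • (Ep χ i j m * (elL χ (alphav i) * z)) := by
      intro z
      rw [← mul_assoc, hXF, add_mul, smul_mul_assoc, mul_assoc, mul_assoc]
    have hEF := rel_EF_eq (χ := χ) i
    have rEF : ∀ z : tU χ, elE χ i * (elF χ i * z)
        = elF χ i * (elE χ i * z) - elK χ (alphav i) * z + elL χ (alphav i) * z := by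
      intro z; rw [← mul_assoc, hEF, add_mul, sub_mul, mul_assoc]
    have hKX := sc_K_Ep (χ := χ) (alphav i) i j (m + 1)
    have hLX := sc_L_Ep (χ := χ) (alphav i) i j (m + 1)
    have hLE := rel_LE (χ := χ) (alphav i) i
    unfold SCom at hKX hLX
    -- stage 1
    have key : Ep χ i j (m + 2) * elF χ i - elF χ i * Ep χ i j (m + 2)
        = ((χ (-alphav i) (alphav i) : ℂ) ^ (m + 1) * (χ (-alphav j) (alphav i) : ℂ)
            - (χ (alphav i) (alphav i) : ℂ) ^ (m + 1) * (χ (alphav i) (alphav j) : ℂ))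
            • (Ep χ i j (m + 1) * elL χ (alphav i))
          + c • (elE χ i * (Ep χ i j m * elL χ (alphav i)))
          - (c * ((χ (alphav i) (alphav i) : ℂ) ^ (m + 1) * (χ (alphav i) (alphav j) : ℂ))
              * (χ (-alphav i) (alphav i) : ℂ))
            • (Ep χ i j m * (elE χ i * elL χ (alphav i))) := by
      rw [Ep_succ (m := m + 1)]
      simp only [mul_sub, sub_mul, mul_add, add_mul, smul_mul_assoc, mul_smul_comm,
        mul_assoc, rXF, rEF, hXF, hEF, hKX, hLX, hLE, smul_sub, smul_add, smul_smul]
      match_scalars <;> ring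
    rw [key, Ep_succ (m := m)]
    simp only [mul_sub, sub_mul, mul_add, add_mul, smul_mul_assoc, mul_smul_comm,
      mul_assoc, smul_sub, smul_add, smul_smul]
    match_scalars
    · ring
    · linear_combination (-(c * (χ (alphav i) (alphav i) : ℂ) ^ m
        * (χ (alphav i) (alphav j) : ℂ))) * hqq

end Helpers

/-- In U~(chi): [E+_{m,a_i,a_j}, F+_{n,a_i,a_k}] = 0 for pairwise distinct i, j, k. -/
theorem commutator_Ep_Fp_distinct {N : ℕ} (χ : Mz N → Mz N → ℂˣ) (hχ : IsBihom χ)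
    (i j k : Fin N) (hij : i ≠ j) (hjk : j ≠ k) (hki : k ≠ i) (m n : ℕ) :
    Ep χ i j m * Fp χ i k n - Fp χ i k n * Ep χ i j m = 0 := by
  rw [sub_eq_zero]
  induction m generalizing n with
  | zero =>
    have h := sc_Ej_Fp (χ := χ) (show j ≠ i from hij.symm) hjk n
    unfold SCom at h
    simpa [Ep_zero] using h
  | succ m ihm =>
    induction n with
    | zero =>
      have h := sc_Ep_Fk (χ := χ) (show i ≠ k from hki.symm) hjk (m + 1)
      unfold SCom at h
      simpa [Fp_zero] using h
    | succ n ihn =>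
      obtain ⟨c, hc⟩ := comm_Ep_F hχ hij m
      have hXF : Ep χ i j (m + 1) * elF χ i
          = elF χ i * Ep χ i j (m + 1) + c • (Ep χ i j m * elL χ (alphav i)) := by
        rw [← hc]; abel
      have rXF : ∀ z : tU χ, Ep χ i j (m + 1) * (elF χ i * z)
          = elF χ i * (Ep χ i j (m + 1) * z)
            + c • (Ep χ i j m * (elL χ (alphav i) * z)) := by
        intro z
        rw [← mul_assoc, hXF, add_mul, smul_mul_assoc, mul_assoc, mul_assoc]
      have hXG : Ep χ i j (m + 1) * Fp χ i k n = Fp χ i k n * Ep χ i j (m + 1) := ihn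
      have rXG : ∀ z : tU χ, Ep χ i j (m + 1) * (Fp χ i k n * z)
          = Fp χ i k n * (Ep χ i j (m + 1) * z) := by
        intro z; rw [← mul_assoc, hXG, mul_assoc]
      have hYG : Ep χ i j m * Fp χ i k n = Fp χ i k n * Ep χ i j m := ihm n
      have rYG : ∀ z : tU χ, Ep χ i j m * (Fp χ i k n * z)
          = Fp χ i k n * (Ep χ i j m * z) := by
        intro z; rw [← mul_assoc, hYG, mul_assoc]
      have hLG := sc_L_Fp (χ := χ) (alphav i) i k n
      unfold SCom at hLG
      rw [Fp_succ]
      simp only [mul_sub, sub_mul, mul_add, add_mul, smul_mul_assoc, mul_smul_comm,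
        mul_assoc, rXF, rXG, rYG, hXF, hXG, hYG, hLG, smul_sub, smul_add, smul_smul]
      match_scalars <;> ring
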